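/- Let k be a field, K a field extension of k, A a k-algebra, and ℓ, m positive integers. If ρ : A → E_{(ℓ,m)}(K) is a nonsplit (ℓ,m)-extension of irreducible representations that is not a self extension, then Kρ(A) = E_{(ℓ,m)}(K). -/

import Mathlib

open Matrix

noncomputable section

/-- The `n × n` matrix with `1`s on the superdiagonal and `0`s elsewhere. -/
def supDiag (K : Type*) [Semiring K] (n : ℕ) : Matrix (Fin n) (Fin n) K :=
  Matrix.of fun i j => if (i : ℕ) + 1 = (j : ℕ) then 1 else 0

/-- The `n × n` matrix with `1`s on the subdiagonal and `0`s elsewhere. -/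
def subDiag (K : Type*) [Semiring K] (n : ℕ) : Matrix (Fin n) (Fin n) K :=
  (supDiag K n).transpose

/-- Block index function for the `(ℓ, m)` block decomposition of `Fin (ℓ + m)`. -/
def blkIdx (ℓ m : ℕ) (i : Fin (ℓ + m)) : ℕ := if (i : ℕ) < ℓ then 0 else 1

/-- `E_{(ℓ,m)}(K)`: the `K`-subalgebra of `M_{ℓ+m}(K)` of block upper triangular
matrices `[[a, b], [0, c]]` with `a ∈ M_ℓ(K)`, `b ∈ M_{ℓ×m}(K)`, `c ∈ M_m(K)`. -/
def Eblk (K : Type*) [CommRing K] (ℓ m : ℕ) :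
    Subalgebra K (Matrix (Fin (ℓ + m)) (Fin (ℓ + m)) K) where
  carrier := { M | M.BlockTriangular (blkIdx ℓ m) }
  mul_mem' ha hb := ha.mul hb
  add_mem' ha hb := ha.add hb
  one_mem' := Matrix.blockTriangular_one
  algebraMap_mem' r := fun i j hij => by
    rw [Matrix.algebraMap_matrix_apply, if_neg]
    rintro rfl
    exact lt_irrefl _ hij

/-- `T_{(ℓ,m)}(K)`: the set of block matrices `[[0, b], [0, 0]]` with `b ∈ M_{ℓ×m}(K)`. -/
def Tblk (K : Type*) [Semiring K] (ℓ m : ℕ) : Set (Matrix (Fin (ℓ + m)) (Fin (ℓ + m)) K) :=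
  { M | ∀ i j : Fin (ℓ + m), ¬((i : ℕ) < ℓ ∧ ℓ ≤ (j : ℕ)) → M i j = 0 }

/-- `π_ℓ`: the upper-left `ℓ × ℓ` block of an `(ℓ+m) × (ℓ+m)` matrix. -/
def blkL (K : Type*) [Semiring K] (ℓ m : ℕ) (M : Matrix (Fin (ℓ + m)) (Fin (ℓ + m)) K) :
    Matrix (Fin ℓ) (Fin ℓ) K :=
  Matrix.of fun i j => M (Fin.castAdd m i) (Fin.castAdd m j)

/-- `π_m`: the lower-right `m × m` block of an `(ℓ+m) × (ℓ+m)` matrix. -/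
def blkR (K : Type*) [Semiring K] (ℓ m : ℕ) (M : Matrix (Fin (ℓ + m)) (Fin (ℓ + m)) K) :
    Matrix (Fin m) (Fin m) K :=
  Matrix.of fun i j => M (Fin.natAdd ℓ i) (Fin.natAdd ℓ j)

/-- The block matrix `I_ℓ = [[1, 0], [0, 0]]` inside `M_{ℓ+m}(K)`. -/
def idL (K : Type*) [Semiring K] (ℓ m : ℕ) : Matrix (Fin (ℓ + m)) (Fin (ℓ + m)) K :=
  Matrix.of fun i j => if i = j ∧ (i : ℕ) < ℓ then 1 else 0

/-! ### Auxiliary definitions and lemmas -/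

def upRblk (K : Type*) [Semiring K] (ℓ m : ℕ) (M : Matrix (Fin (ℓ + m)) (Fin (ℓ + m)) K) :
    Matrix (Fin ℓ) (Fin m) K :=
  Matrix.of fun i j => M (Fin.castAdd m i) (Fin.natAdd ℓ j)

section Aux
variable {K : Type*} [Field K]

theorem aux_stdmul_left {p q : ℕ} (i i0 : Fin p) (c : K) (s : Matrix (Fin p) (Fin q) K)
    (a : Fin p) (b : Fin q) :
    (Matrix.single i i0 c * s) a b = if i = a then c * s i0 b else 0 := by
  rw [Matrix.mul_apply]
  by_cases ha : i = a
  · subst ha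
    rw [if_pos rfl, Finset.sum_eq_single i0]
    · simp [Matrix.single]
    · intro t _ ht; simp [Matrix.single, Ne.symm ht]
    · simp
  · rw [if_neg ha]
    exact Finset.sum_eq_zero fun t _ => by simp [Matrix.single, ha]

theorem aux_stdmul_right {p q : ℕ} (j0 j : Fin q) (c : K) (s : Matrix (Fin p) (Fin q) K)
    (a : Fin p) (b : Fin q) :
    (s * Matrix.single j0 j c) a b = if j = b then s a j0 * c else 0 := by
  rw [Matrix.mul_apply]
  by_cases hb : j = b
  · subst hb
    rw [if_pos rfl, Finset.sum_eq_single j0]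
    · simp [Matrix.single]
    · intro t _ ht; simp [Matrix.single, Ne.symm ht]
    · simp
  · rw [if_neg hb]
    exact Finset.sum_eq_zero fun t _ => by simp [Matrix.single, hb]

/-- A `K`-subspace of rectangular matrices closed under two-sided multiplication
which contains a nonzero element is everything. -/
theorem aux_submodule_eq_top {p q : ℕ} (S : Submodule K (Matrix (Fin p) (Fin q) K))
    (hcl : ∀ (x : Matrix (Fin p) (Fin p) K) (s : Matrix (Fin p) (Fin q) K)
      (y : Matrix (Fin q) (Fin q) K), s ∈ S → x * s * y ∈ S)
    (hne : ∃ s ∈ S, s ≠ 0) : S = ⊤ := by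
  obtain ⟨s, hsS, hs0⟩ := hne
  obtain ⟨i0, j0, h0⟩ : ∃ i0 j0, s i0 j0 ≠ 0 := by
    by_contra h
    push_neg at h
    exact hs0 (by ext i j; simpa using h i j)
  have hstd : ∀ (i : Fin p) (j : Fin q), Matrix.single i j (1 : K) ∈ S := by
    intro i j
    have key : Matrix.single i i0 ((s i0 j0)⁻¹) * s * Matrix.single j0 j (1 : K)
        = Matrix.single i j (1 : K) := by
      ext a b
      rw [aux_stdmul_right, aux_stdmul_left]
      by_cases hb : j = b <;> by_cases ha : i = a <;>
        simp [Matrix.single, ha, hb, inv_mul_cancel₀ h0]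
    exact key ▸ hcl _ _ _ hsS
  refine eq_top_iff.2 fun M _ => ?_
  rw [matrix_eq_sum_single M]
  refine Submodule.sum_mem _ fun i _ => Submodule.sum_mem _ fun j _ => ?_
  have : Matrix.single i j (M i j) = M i j • Matrix.single i j (1 : K) := by
    rw [smul_single, smul_eq_mul, mul_one]
  rw [this]
  exact S.smul_mem _ (hstd i j)

theorem aux_matrix_semisimple {n : ℕ} (hn : 0 < n) :
    IsSemisimpleRing (Matrix (Fin n) (Fin n) K) := by
  set R := Matrix (Fin n) (Fin n) K with hR
  let col : Fin n → Submodule R R := fun j =>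
    { carrier := {M | ∀ a b, b ≠ j → M a b = 0}
      add_mem' := fun {M N} hM hN a b h => by
        show M a b + N a b = 0
        rw [hM a b h, hN a b h, add_zero]
      zero_mem' := fun a b h => rfl
      smul_mem' := fun X M hM => fun a b h => by
        show (X * M) a b = 0
        rw [Matrix.mul_apply]
        exact Finset.sum_eq_zero fun t _ => by rw [hM t b h, mul_zero] }
  have hsimple : ∀ j, IsSimpleModule R (col j) := by
    intro j
    have hEmem : Matrix.single (⟨0, hn⟩ : Fin n) j (1 : K) ∈ col j := by
      intro a b h
      simp [Matrix.single, Ne.symm h]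
    have hEne : (⟨Matrix.single (⟨0, hn⟩ : Fin n) j (1 : K), hEmem⟩ : col j) ≠ 0 := by
      intro hcon
      have h1 : Matrix.single (⟨0, hn⟩ : Fin n) j (1 : K) = 0 := congrArg Subtype.val hcon
      have := congrFun (congrFun h1 ⟨0, hn⟩) j
      simp [Matrix.single] at this
    haveI : Nontrivial (col j) := nontrivial_of_ne _ _ hEne
    refine (isSimpleModule_iff ..).2 ⟨fun W => ?_⟩
    rcases eq_or_ne W ⊥ with h | h
    · exact Or.inl h
    right
    obtain ⟨w, hwW, hw0⟩ := (Submodule.ne_bot_iff W).1 h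
    have hwv0 : (w : R) ≠ 0 := fun hc => hw0 (Subtype.ext hc)
    obtain ⟨i0, b0, hib⟩ : ∃ i0 b0, (w : R) i0 b0 ≠ 0 := by
      by_contra hcon
      push_neg at hcon
      exact hwv0 (by ext a b; exact hcon a b)
    have hb0 : b0 = j := by
      by_contra hbj
      exact hib (w.2 i0 b0 hbj)
    subst hb0
    refine eq_top_iff.2 fun t _ => ?_
    set x : R := Matrix.of fun a b => ((t : R) a b0 * ((w : R) i0 b0)⁻¹) * (if b = i0 then 1 else 0)
      with hx
    have hxw : x • w = t := by
      apply Subtype.ext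
      have : (↑(x • w) : R) = x * (w : R) := rfl
      rw [this]
      ext a b
      rw [Matrix.mul_apply]
      rw [Finset.sum_eq_single i0]
      · by_cases hbj : b = b0
        · subst hbj
          simp [hx, inv_mul_cancel_right₀ hib]
        · rw [w.2 i0 b hbj, t.2 a b hbj, mul_zero]
      · intro c _ hc
        simp [hx, hc]
      · simp
    exact hxw ▸ W.smul_mem x hwW
  apply IsSemisimpleModule.of_sSup_simples_eq_top
  refine eq_top_iff.2 fun M _ => ?_
  have hcols : ∀ j : Fin n, sSup { m : Submodule R R | IsSimpleModule R m } ≥ col j :=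
    fun j => le_sSup (hsimple j)
  rw [matrix_eq_sum_single M]
  refine Submodule.sum_mem _ fun i _ => Submodule.sum_mem _ fun j _ => ?_
  exact hcols j (by intro a b h; simp [Matrix.single, Ne.symm h])

theorem aux_sum_smul_mulVec {n : ℕ} (c : Fin n → K) (M : Fin n → Matrix (Fin n) (Fin n) K)
    (v : Fin n → K) (i : Fin n) :
    ((∑ t, c t • M t) *ᵥ v) i = ∑ t, c t * ((M t *ᵥ v) i) := by
  simp only [mulVec, dotProduct, Matrix.sum_apply, Pi.smul_apply, smul_eq_mul, Finset.mul_sum,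
    Finset.sum_mul]
  rw [Finset.sum_comm]
  refine Finset.sum_congr rfl fun t _ => Finset.sum_congr rfl fun b _ => ?_
  simp only [Matrix.smul_apply, smul_eq_mul]
  ring

/-- Concrete Skolem–Noether: a nonzero multiplicative `K`-linear endomap of a matrix
algebra intertwines with an invertible matrix. -/
theorem aux_inner {n : ℕ} (hn : 0 < n)
    (φ : Matrix (Fin n) (Fin n) K → Matrix (Fin n) (Fin n) K)
    (hadd : ∀ x y, φ (x + y) = φ x + φ y)
    (hmul : ∀ x y, φ (x * y) = φ x * φ y)
    (hsmul : ∀ (c : K) x, φ (c • x) = c • φ x)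
    (hne : φ (Matrix.single (⟨0, hn⟩ : Fin n) (⟨0, hn⟩ : Fin n) (1 : K)) ≠ 0) :
    ∃ Q : Matrix (Fin n) (Fin n) K, IsUnit Q ∧ ∀ x, φ x * Q = Q * x := by
  set z : Fin n := ⟨0, hn⟩
  set E : Fin n → Fin n → Matrix (Fin n) (Fin n) K := fun p q => Matrix.single p q (1 : K)
    with hEdef
  obtain ⟨i0, j0, h0⟩ : ∃ i0 j0, φ (E z z) i0 j0 ≠ 0 := by
    by_contra h
    push_neg at h
    exact hne (by ext a b; simpa using h a b)
  set v : Fin n → K := φ (E z z) *ᵥ Pi.single j0 1 with hv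
  have hvi0 : v i0 ≠ 0 := by simpa [hv] using h0
  have hEzz : E z z * E z z = E z z := by simp [hEdef]
  have hvfix : φ (E z z) *ᵥ v = v := by rw [hv, mulVec_mulVec, ← hmul, hEzz]
  set Q : Matrix (Fin n) (Fin n) K := Matrix.of fun i j => (φ (E j z) *ᵥ v) i with hQ
  have hQcol : ∀ i, Q i z = v i := fun i => congrFun hvfix i
  have hxE : ∀ (x : Matrix (Fin n) (Fin n) K) (j : Fin n),
      x * E j z = ∑ t, x t j • E t z := by
    intro x j
    ext a b
    rw [Matrix.mul_apply, Matrix.sum_apply]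
    by_cases hb : b = z
    · subst hb
      rw [Finset.sum_eq_single j, Finset.sum_eq_single a]
      · simp [hEdef, Matrix.single]
      · intro c _ hc; simp [hEdef, Matrix.single, hc, Ne.symm hc]
      · simp
      · intro c _ hc; simp [hEdef, Matrix.single, hc, Ne.symm hc]
      · simp
    · rw [Finset.sum_eq_zero, Finset.sum_eq_zero]
      · intro c _; simp [hEdef, Matrix.single, Ne.symm hb]
      · intro c _; simp [hEdef, Matrix.single, Ne.symm hb]
  have hφsum : ∀ (c : Fin n → K) (M : Fin n → Matrix (Fin n) (Fin n) K),
      φ (∑ t, c t • M t) = ∑ t, c t • φ (M t) := by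
    intro c M
    have h1 : φ (∑ t, c t • M t) = ∑ t, φ (c t • M t) :=
      map_sum (AddMonoidHom.mk' φ (fun a b => hadd a b)) (fun t => c t • M t) Finset.univ
    rw [h1]
    exact Finset.sum_congr rfl fun t _ => hsmul _ _
  have hcomm : ∀ x, φ x * Q = Q * x := by
    intro x
    ext i j
    have lhs : (φ x * Q) i j = (φ (x * E j z) *ᵥ v) i := by
      rw [hmul, ← mulVec_mulVec]
      rfl
    have rhs : (Q * x) i j = (φ (x * E j z) *ᵥ v) i := by
      rw [hxE, hφsum, Matrix.mul_apply, aux_sum_smul_mulVec]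
      exact Finset.sum_congr rfl fun t _ => mul_comm _ _
    rw [lhs, rhs]
  have hker : ∀ w : Fin n → K, Q *ᵥ w = 0 → w = 0 := by
    intro w hw
    by_contra hw0
    obtain ⟨j1, hj1⟩ : ∃ j1, w j1 ≠ 0 := by
      by_contra hc; push_neg at hc; exact hw0 (funext hc)
    have hQxw : ∀ x : Matrix (Fin n) (Fin n) K, Q *ᵥ (x *ᵥ w) = 0 := by
      intro x
      rw [mulVec_mulVec, ← hcomm, ← mulVec_mulVec, hw, mulVec_zero]
    have hQ0 : ∀ i : Fin n, Q *ᵥ Pi.single i (1 : K) = 0 := by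
      intro i
      have hx : (Matrix.single i j1 ((w j1)⁻¹) : Matrix (Fin n) (Fin n) K) *ᵥ w
          = Pi.single i (1 : K) := by
        ext a
        rw [mulVec, dotProduct]
        by_cases ha : a = i
        · subst ha
          rw [Finset.sum_eq_single j1]
          · simp [Matrix.single, inv_mul_cancel₀ hj1]
          · intro c _ hc; simp [Matrix.single, Ne.symm hc]
          · simp
        · rw [Finset.sum_eq_zero]
          · simp [Pi.single_apply, ha]
          · intro c _; simp [Matrix.single, Ne.symm ha]
      rw [← hx]
      exact hQxw _
    have : v i0 = 0 := by
      have h1 := congrFun (hQ0 z) i0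
      rw [mulVec_single] at h1
      simpa [hQcol i0] using h1
    exact hvi0 this
  have hdet : Q.det ≠ 0 := by
    intro hdet
    obtain ⟨w, hw0, hww⟩ := (Matrix.exists_mulVec_eq_zero_iff).2 hdet
    exact hw0 (hker w hww)
  exact ⟨Q, (Matrix.isUnit_iff_isUnit_det Q).2 (isUnit_iff_ne_zero.2 hdet), hcomm⟩

end Aux

section BlockLemmas
variable {K : Type*} [Field K] {ℓ m : ℕ}

theorem tri_apply {M : Matrix (Fin (ℓ + m)) (Fin (ℓ + m)) K}
    (h : M.BlockTriangular (blkIdx ℓ m)) {i j : Fin (ℓ + m)}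
    (hi : ¬ (i : ℕ) < ℓ) (hj : (j : ℕ) < ℓ) : M i j = 0 :=
  h (by simp [blkIdx, hi, hj])

theorem aux_fin_cases (i : Fin (ℓ + m)) :
    (∃ i' : Fin ℓ, i = Fin.castAdd m i') ∨ (∃ i' : Fin m, i = Fin.natAdd ℓ i') := by
  by_cases h : (i : ℕ) < ℓ
  · exact Or.inl ⟨⟨i, h⟩, by ext; simp⟩
  · refine Or.inr ⟨⟨(i : ℕ) - ℓ, by have := i.isLt; omega⟩, by ext; simp; omega⟩

theorem blkL_mul (M N : Matrix (Fin (ℓ + m)) (Fin (ℓ + m)) K)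
    (hN : N.BlockTriangular (blkIdx ℓ m)) :
    blkL K ℓ m (M * N) = blkL K ℓ m M * blkL K ℓ m N := by
  ext i j
  show (M * N) (Fin.castAdd m i) (Fin.castAdd m j) = _
  rw [Matrix.mul_apply, Fin.sum_univ_add]
  have h2 : ∀ t : Fin m,
      M (Fin.castAdd m i) (Fin.natAdd ℓ t) * N (Fin.natAdd ℓ t) (Fin.castAdd m j) = 0 := by
    intro t
    rw [tri_apply hN (by simp) (by simp [j.isLt]), mul_zero]
  rw [Finset.sum_eq_zero fun t _ => h2 t, add_zero, Matrix.mul_apply]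
  rfl

theorem blkR_mul (M N : Matrix (Fin (ℓ + m)) (Fin (ℓ + m)) K)
    (hM : M.BlockTriangular (blkIdx ℓ m)) :
    blkR K ℓ m (M * N) = blkR K ℓ m M * blkR K ℓ m N := by
  ext i j
  show (M * N) (Fin.natAdd ℓ i) (Fin.natAdd ℓ j) = _
  rw [Matrix.mul_apply, Fin.sum_univ_add]
  have h1 : ∀ t : Fin ℓ,
      M (Fin.natAdd ℓ i) (Fin.castAdd m t) * N (Fin.castAdd m t) (Fin.natAdd ℓ j) = 0 := by
    intro t
    rw [tri_apply hM (by simp) (by simp [t.isLt]), zero_mul]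
  rw [Finset.sum_eq_zero fun t _ => h1 t, zero_add, Matrix.mul_apply]
  rfl

theorem blkL_one : blkL K ℓ m 1 = 1 := by
  ext i j
  show (1 : Matrix (Fin (ℓ + m)) (Fin (ℓ + m)) K) (Fin.castAdd m i) (Fin.castAdd m j) = _
  simp [Matrix.one_apply, Fin.castAdd_inj]

theorem blkR_one : blkR K ℓ m 1 = 1 := by
  ext i j
  show (1 : Matrix (Fin (ℓ + m)) (Fin (ℓ + m)) K) (Fin.natAdd ℓ i) (Fin.natAdd ℓ j) = _
  simp [Matrix.one_apply, Fin.ext_iff]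

theorem blkL_add (M N : Matrix (Fin (ℓ + m)) (Fin (ℓ + m)) K) :
    blkL K ℓ m (M + N) = blkL K ℓ m M + blkL K ℓ m N := rfl

theorem blkR_add (M N : Matrix (Fin (ℓ + m)) (Fin (ℓ + m)) K) :
    blkR K ℓ m (M + N) = blkR K ℓ m M + blkR K ℓ m N := rfl

theorem blkL_sub (M N : Matrix (Fin (ℓ + m)) (Fin (ℓ + m)) K) :
    blkL K ℓ m (M - N) = blkL K ℓ m M - blkL K ℓ m N := rfl

theorem blkR_sub (M N : Matrix (Fin (ℓ + m)) (Fin (ℓ + m)) K) :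
    blkR K ℓ m (M - N) = blkR K ℓ m M - blkR K ℓ m N := rfl

theorem blkL_smul (c : K) (M : Matrix (Fin (ℓ + m)) (Fin (ℓ + m)) K) :
    blkL K ℓ m (c • M) = c • blkL K ℓ m M := rfl

theorem blkR_smul (c : K) (M : Matrix (Fin (ℓ + m)) (Fin (ℓ + m)) K) :
    blkR K ℓ m (c • M) = c • blkR K ℓ m M := rfl

theorem upR_add (M N : Matrix (Fin (ℓ + m)) (Fin (ℓ + m)) K) :
    upRblk K ℓ m (M + N) = upRblk K ℓ m M + upRblk K ℓ m N := rfl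

theorem upR_smul (c : K) (M : Matrix (Fin (ℓ + m)) (Fin (ℓ + m)) K) :
    upRblk K ℓ m (c • M) = c • upRblk K ℓ m M := rfl

theorem blkL_algebraMap (r : K) :
    blkL K ℓ m (algebraMap K (Matrix (Fin (ℓ + m)) (Fin (ℓ + m)) K) r)
      = algebraMap K (Matrix (Fin ℓ) (Fin ℓ) K) r := by
  ext i j
  show (algebraMap K (Matrix (Fin (ℓ + m)) (Fin (ℓ + m)) K) r) (Fin.castAdd m i)
      (Fin.castAdd m j) = _
  simp [Matrix.algebraMap_matrix_apply, Fin.castAdd_inj]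

theorem blkR_algebraMap (r : K) :
    blkR K ℓ m (algebraMap K (Matrix (Fin (ℓ + m)) (Fin (ℓ + m)) K) r)
      = algebraMap K (Matrix (Fin m) (Fin m) K) r := by
  ext i j
  show (algebraMap K (Matrix (Fin (ℓ + m)) (Fin (ℓ + m)) K) r) (Fin.natAdd ℓ i)
      (Fin.natAdd ℓ j) = _
  simp [Matrix.algebraMap_matrix_apply, Fin.ext_iff]

theorem mem_Tblk_of_blocks_zero {M : Matrix (Fin (ℓ + m)) (Fin (ℓ + m)) K}
    (htri : M.BlockTriangular (blkIdx ℓ m)) (hL : blkL K ℓ m M = 0) (hR : blkR K ℓ m M = 0) :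
    M ∈ Tblk K ℓ m := by
  intro i j h
  rcases aux_fin_cases i with ⟨i', rfl⟩ | ⟨i', rfl⟩ <;>
    rcases aux_fin_cases j with ⟨j', rfl⟩ | ⟨j', rfl⟩
  · exact congrFun (congrFun hL i') j'
  · exact absurd ⟨by simp [i'.isLt], by simp⟩ h
  · exact tri_apply htri (by simp) (by simp [j'.isLt])
  · exact congrFun (congrFun hR i') j'

theorem Tblk_ext {M N : Matrix (Fin (ℓ + m)) (Fin (ℓ + m)) K}
    (hM : M ∈ Tblk K ℓ m) (hN : N ∈ Tblk K ℓ m)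
    (h : upRblk K ℓ m M = upRblk K ℓ m N) : M = N := by
  ext i j
  by_cases hreg : (i : ℕ) < ℓ ∧ ℓ ≤ (j : ℕ)
  · rcases aux_fin_cases i with ⟨i', rfl⟩ | ⟨i', rfl⟩
    · rcases aux_fin_cases j with ⟨j', rfl⟩ | ⟨j', rfl⟩
      · exact absurd hreg (by simp [j'.isLt])
      · exact congrFun (congrFun h i') j'
    · exact absurd hreg (by simp)
  · rw [hM i j hreg, hN i j hreg]

theorem mul_mem_Tblk {b t : Matrix (Fin (ℓ + m)) (Fin (ℓ + m)) K}
    (hb : b.BlockTriangular (blkIdx ℓ m)) (ht : t ∈ Tblk K ℓ m) :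
    b * t ∈ Tblk K ℓ m ∧ upRblk K ℓ m (b * t) = blkL K ℓ m b * upRblk K ℓ m t := by
  constructor
  · intro i j h
    rw [Matrix.mul_apply]
    by_cases hj : ℓ ≤ (j : ℕ)
    · have hi : ¬ (i : ℕ) < ℓ := fun hi => h ⟨hi, hj⟩
      refine Finset.sum_eq_zero fun q _ => ?_
      by_cases hq : (q : ℕ) < ℓ
      · rw [tri_apply hb hi hq, zero_mul]
      · rw [ht q j (fun hc => hq hc.1), mul_zero]
    · exact Finset.sum_eq_zero fun q _ => by rw [ht q j (fun hc => hj hc.2), mul_zero]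
  · ext i j
    show (b * t) (Fin.castAdd m i) (Fin.natAdd ℓ j) = _
    rw [Matrix.mul_apply, Fin.sum_univ_add]
    have h2 : ∀ q : Fin m,
        b (Fin.castAdd m i) (Fin.natAdd ℓ q) * t (Fin.natAdd ℓ q) (Fin.natAdd ℓ j) = 0 := by
      intro q
      rw [ht _ _ (by simp), mul_zero]
    rw [Finset.sum_eq_zero fun q _ => h2 q, add_zero, Matrix.mul_apply]
    rfl

theorem Tblk_mul_mem {b t : Matrix (Fin (ℓ + m)) (Fin (ℓ + m)) K}
    (hb : b.BlockTriangular (blkIdx ℓ m)) (ht : t ∈ Tblk K ℓ m) :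
    t * b ∈ Tblk K ℓ m ∧ upRblk K ℓ m (t * b) = upRblk K ℓ m t * blkR K ℓ m b := by
  constructor
  · intro i j h
    rw [Matrix.mul_apply]
    by_cases hi : (i : ℕ) < ℓ
    · have hj : ¬ ℓ ≤ (j : ℕ) := fun hj => h ⟨hi, hj⟩
      refine Finset.sum_eq_zero fun q _ => ?_
      by_cases hq : ℓ ≤ (q : ℕ)
      · rw [tri_apply hb (by omega) (by omega), mul_zero]
      · rw [ht i q (fun hc => hq hc.2), zero_mul]
    · exact Finset.sum_eq_zero fun q _ => by rw [ht i q (fun hc => hi hc.1), zero_mul]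
  · ext i j
    show (t * b) (Fin.castAdd m i) (Fin.natAdd ℓ j) = _
    rw [Matrix.mul_apply, Fin.sum_univ_add]
    have h1 : ∀ q : Fin ℓ,
        t (Fin.castAdd m i) (Fin.castAdd m q) * b (Fin.castAdd m q) (Fin.natAdd ℓ j) = 0 := by
      intro q
      rw [ht _ _ (by simp [q.isLt]), zero_mul]
    rw [Finset.sum_eq_zero fun q _ => h1 q, zero_add, Matrix.mul_apply]
    rfl

end BlockLemmas

/-- A nonsplit `(ℓ,m)`-extension of irreducible representations which is not
a self extension satisfies `Kρ(A) = E_{(ℓ,m)}(K)`. -/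
theorem stmt4 (k K : Type*) [Field k] [Field K] [Algebra k K]
    (A : Type*) [Ring A] [Algebra k A] (ℓ m : ℕ) (hℓ : 0 < ℓ) (hm : 0 < m)
    (ρ : A →ₐ[k] Matrix (Fin (ℓ + m)) (Fin (ℓ + m)) K)
    (hE : ∀ a, ρ a ∈ Eblk K ℓ m)
    (hirrL : Algebra.adjoin K (Set.range fun a => blkL K ℓ m (ρ a)) = ⊤)
    (hirrR : Algebra.adjoin K (Set.range fun a => blkR K ℓ m (ρ a)) = ⊤)
    (hnonsplit : ¬ IsSemisimpleRing (Algebra.adjoin K (Set.range ρ)))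
    (hnotself : ¬ ∃ (h : ℓ = m) (Q₀ : Matrix (Fin m) (Fin m) K), IsUnit Q₀ ∧
      ∀ a, blkR K ℓ m (ρ a) =
        Q₀⁻¹ * (blkL K ℓ m (ρ a)).submatrix (Fin.cast h.symm) (Fin.cast h.symm) * Q₀) :
    Algebra.adjoin K (Set.range ρ) = Eblk K ℓ m := by
  set B := Algebra.adjoin K (Set.range ρ) with hBdef
  have hBle : B ≤ Eblk K ℓ m := Algebra.adjoin_le (by rintro x ⟨a, rfl⟩; exact hE a)
  have hBE : ∀ b ∈ B, b.BlockTriangular (blkIdx ℓ m) := fun b hb => hBle hb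
  have hρB : ∀ a, ρ a ∈ B := fun a => Algebra.subset_adjoin ⟨a, rfl⟩
  -- the image of `B` under the two block projections
  let C : Subalgebra K (Matrix (Fin ℓ) (Fin ℓ) K × Matrix (Fin m) (Fin m) K) :=
    { carrier := { p | ∃ b ∈ B, blkL K ℓ m b = p.1 ∧ blkR K ℓ m b = p.2 }
      mul_mem' := by
        rintro p q ⟨b, hb, hb1, hb2⟩ ⟨c, hc, hc1, hc2⟩
        exact ⟨b * c, mul_mem hb hc,
          by rw [blkL_mul _ _ (hBE c hc), hb1, hc1]; rfl,
          by rw [blkR_mul _ _ (hBE b hb), hb2, hc2]; rfl⟩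
      add_mem' := by
        rintro p q ⟨b, hb, hb1, hb2⟩ ⟨c, hc, hc1, hc2⟩
        exact ⟨b + c, add_mem hb hc,
          by rw [blkL_add, hb1, hc1]; rfl,
          by rw [blkR_add, hb2, hc2]; rfl⟩
      one_mem' := ⟨1, one_mem B, blkL_one, blkR_one⟩
      zero_mem' := ⟨0, zero_mem B, by ext i j <;> rfl, by ext i j <;> rfl⟩
      algebraMap_mem' := fun r =>
        ⟨algebraMap K _ r, Subalgebra.algebraMap_mem B r, blkL_algebraMap r, blkR_algebraMap r⟩ }
  have hCmem : ∀ p, p ∈ C ↔ ∃ b ∈ B, blkL K ℓ m b = p.1 ∧ blkR K ℓ m b = p.2 :=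
    fun p => Iff.rfl
  -- surjectivity of the two projections
  have hsurjL : ∀ x, ∃ b ∈ B, blkL K ℓ m b = x := by
    let D : Subalgebra K (Matrix (Fin ℓ) (Fin ℓ) K) :=
      { carrier := { x | ∃ b ∈ B, blkL K ℓ m b = x }
        mul_mem' := by
          rintro p q ⟨b, hb, rfl⟩ ⟨c, hc, rfl⟩
          exact ⟨b * c, mul_mem hb hc, blkL_mul _ _ (hBE c hc)⟩
        add_mem' := by
          rintro p q ⟨b, hb, rfl⟩ ⟨c, hc, rfl⟩
          exact ⟨b + c, add_mem hb hc, blkL_add _ _⟩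
        one_mem' := ⟨1, one_mem B, blkL_one⟩
        zero_mem' := ⟨0, zero_mem B, by ext i j <;> rfl⟩
        algebraMap_mem' := fun r =>
          ⟨algebraMap K _ r, Subalgebra.algebraMap_mem B r, blkL_algebraMap r⟩ }
    have hD : Algebra.adjoin K (Set.range fun a => blkL K ℓ m (ρ a)) ≤ D :=
      Algebra.adjoin_le (by rintro x ⟨a, rfl⟩; exact ⟨ρ a, hρB a, rfl⟩)
    rw [hirrL] at hD
    exact fun x => hD (Algebra.mem_top (R := K))
  have hsurjR : ∀ y, ∃ b ∈ B, blkR K ℓ m b = y := by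
    let D : Subalgebra K (Matrix (Fin m) (Fin m) K) :=
      { carrier := { x | ∃ b ∈ B, blkR K ℓ m b = x }
        mul_mem' := by
          rintro p q ⟨b, hb, rfl⟩ ⟨c, hc, rfl⟩
          exact ⟨b * c, mul_mem hb hc, blkR_mul _ _ (hBE b hb)⟩
        add_mem' := by
          rintro p q ⟨b, hb, rfl⟩ ⟨c, hc, rfl⟩
          exact ⟨b + c, add_mem hb hc, blkR_add _ _⟩
        one_mem' := ⟨1, one_mem B, blkR_one⟩
        zero_mem' := ⟨0, zero_mem B, by ext i j <;> rfl⟩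
        algebraMap_mem' := fun r =>
          ⟨algebraMap K _ r, Subalgebra.algebraMap_mem B r, blkR_algebraMap r⟩ }
    have hD : Algebra.adjoin K (Set.range fun a => blkR K ℓ m (ρ a)) ≤ D :=
      Algebra.adjoin_le (by rintro x ⟨a, rfl⟩; exact ⟨ρ a, hρB a, rfl⟩)
    rw [hirrR] at hD
    exact fun x => hD (Algebra.mem_top (R := K))
  -- the two "Goursat kernels"
  let K1 : Submodule K (Matrix (Fin ℓ) (Fin ℓ) K) :=
    { carrier := { x | (x, (0 : Matrix (Fin m) (Fin m) K)) ∈ C }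
      add_mem' := fun {x y} hx hy => by
        have := C.add_mem hx hy
        simpa using this
      zero_mem' := C.zero_mem
      smul_mem' := fun c x hx => by
        have := C.smul_mem hx c
        simpa using this }
  let K2 : Submodule K (Matrix (Fin m) (Fin m) K) :=
    { carrier := { y | ((0 : Matrix (Fin ℓ) (Fin ℓ) K), y) ∈ C }
      add_mem' := fun {x y} hx hy => by
        have := C.add_mem hx hy
        simpa using this
      zero_mem' := C.zero_mem
      smul_mem' := fun c x hx => by
        have := C.smul_mem hx c
        simpa using this }
  have hK1cases : K1 = ⊥ ∨ K1 = ⊤ := by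
    rcases eq_or_ne K1 ⊥ with h | h
    · exact Or.inl h
    refine Or.inr (aux_submodule_eq_top K1 ?_ ?_)
    · intro X s Y hs
      obtain ⟨bx, hbx, hbx1⟩ := hsurjL X
      obtain ⟨by', hby, hby1⟩ := hsurjL Y
      have hpx : (X, blkR K ℓ m bx) ∈ C := ⟨bx, hbx, hbx1, rfl⟩
      have hpy : (Y, blkR K ℓ m by') ∈ C := ⟨by', hby, hby1, rfl⟩
      have := C.mul_mem (C.mul_mem hpx hs) hpy
      simp at this; exact this
    · obtain ⟨x, hx, hx0⟩ := (Submodule.ne_bot_iff K1).1 h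
      exact ⟨x, hx, hx0⟩
  have hK2cases : K2 = ⊥ ∨ K2 = ⊤ := by
    rcases eq_or_ne K2 ⊥ with h | h
    · exact Or.inl h
    refine Or.inr (aux_submodule_eq_top K2 ?_ ?_)
    · intro X s Y hs
      obtain ⟨bx, hbx, hbx1⟩ := hsurjR X
      obtain ⟨by', hby, hby1⟩ := hsurjR Y
      have hpx : (blkL K ℓ m bx, X) ∈ C := ⟨bx, hbx, rfl, hbx1⟩
      have hpy : (blkL K ℓ m by', Y) ∈ C := ⟨by', hby, rfl, hby1⟩
      have := C.mul_mem (C.mul_mem hpx hs) hpy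
      simp at this; exact this
    · obtain ⟨x, hx, hx0⟩ := (Submodule.ne_bot_iff K2).1 h
      exact ⟨x, hx, hx0⟩
  -- C is everything (the graph case contradicts `hnotself`)
  have hCtop : ∀ x y, (x, y) ∈ C := by
    rcases hK1cases with h1 | h1
    · rcases hK2cases with h2 | h2
      · -- graph case: build the intertwiner and contradict hnotself
        exfalso
        have huniq : ∀ x y y', (x, y) ∈ C → (x, y') ∈ C → y = y' := by
          intro x y y' hy hy'
          have hsub := C.sub_mem hy hy'
          have h0 : ((0 : Matrix (Fin ℓ) (Fin ℓ) K), y - y') ∈ C := by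
            simpa using hsub
          have : y - y' ∈ K2 := h0
          rw [h2] at this
          have := Submodule.mem_bot K |>.1 this
          exact sub_eq_zero.1 this
        set φ : Matrix (Fin ℓ) (Fin ℓ) K → Matrix (Fin m) (Fin m) K :=
          fun x => blkR K ℓ m (Classical.choose (hsurjL x)) with hφdef
        have hφ : ∀ x, (x, φ x) ∈ C := by
          intro x
          obtain ⟨hb, hb1⟩ := Classical.choose_spec (hsurjL x)
          exact ⟨Classical.choose (hsurjL x), hb, hb1, rfl⟩
        have hφadd : ∀ x y, φ (x + y) = φ x + φ y := fun x y =>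
          huniq _ _ _ (hφ (x + y)) (by simpa using C.add_mem (hφ x) (hφ y))
        have hφmul : ∀ x y, φ (x * y) = φ x * φ y := fun x y =>
          huniq _ _ _ (hφ (x * y)) (by simpa using C.mul_mem (hφ x) (hφ y))
        have hφsmul : ∀ (c : K) x, φ (c • x) = c • φ x := fun c x =>
          huniq _ _ _ (hφ (c • x)) (by simpa using C.smul_mem (hφ x) c)
        have hφ0 : φ 0 = 0 := huniq _ _ _ (hφ 0) C.zero_mem
        have hφinj : Function.Injective φ := by
          intro x y hxy
          have hsub := C.sub_mem (hφ x) (hφ y)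
          have h0 : (x - y, (0 : Matrix (Fin m) (Fin m) K)) ∈ C := by
            have : φ x - φ y = 0 := by rw [hxy, sub_self]
            simpa [this] using hsub
          have : x - y ∈ K1 := h0
          rw [h1] at this
          exact sub_eq_zero.1 (Submodule.mem_bot K |>.1 this)
        have hφsurj : Function.Surjective φ := by
          intro y
          obtain ⟨b, hb, hb1⟩ := hsurjR y
          exact ⟨blkL K ℓ m b, huniq _ _ _ (hφ _) ⟨b, hb, rfl, hb1⟩⟩
        -- dimensions agree
        have hlm : ℓ = m := by
          let ψ : Matrix (Fin ℓ) (Fin ℓ) K →ₗ[K] Matrix (Fin m) (Fin m) K :=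
            { toFun := φ
              map_add' := hφadd
              map_smul' := hφsmul }
          have e := LinearEquiv.ofBijective ψ ⟨hφinj, hφsurj⟩
          have hrank := e.finrank_eq
          rw [Module.finrank_matrix, Module.finrank_matrix] at hrank
          simp only [Fintype.card_fin, Module.finrank_self, mul_one] at hrank
          nlinarith [hrank]
        subst hlm
        -- φ is an automorphism of the matrix algebra; apply aux_inner
        have hφne : φ (Matrix.single (⟨0, hℓ⟩ : Fin ℓ) (⟨0, hℓ⟩ : Fin ℓ) (1 : K)) ≠ 0 := by
          intro hc
          have := hφinj (hc.trans hφ0.symm)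
          have h1 := congrFun (congrFun this ⟨0, hℓ⟩) ⟨0, hℓ⟩
          simp [Matrix.single] at h1
        obtain ⟨Q, hQu, hQc⟩ := aux_inner hℓ φ hφadd hφmul hφsmul hφne
        have hQdet : IsUnit Q.det := (Matrix.isUnit_iff_isUnit_det Q).1 hQu
        have hφeq : ∀ x, φ x = Q * x * Q⁻¹ := by
          intro x
          rw [← hQc, Matrix.mul_assoc, Matrix.mul_nonsing_inv _ hQdet, Matrix.mul_one]
        refine hnotself ⟨rfl, Q⁻¹, (Matrix.isUnit_nonsing_inv_iff).2 hQu, ?_⟩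
        intro a
        have hmem : (blkL K ℓ ℓ (ρ a), blkR K ℓ ℓ (ρ a)) ∈ C := ⟨ρ a, hρB a, rfl, rfl⟩
        have hbr : blkR K ℓ ℓ (ρ a) = φ (blkL K ℓ ℓ (ρ a)) :=
          huniq _ _ _ hmem (hφ _)
        have hsub : (blkL K ℓ ℓ (ρ a)).submatrix (Fin.cast (rfl : ℓ = ℓ).symm)
            (Fin.cast (rfl : ℓ = ℓ).symm) = blkL K ℓ ℓ (ρ a) := rfl
        rw [hsub, hbr, hφeq, Matrix.nonsing_inv_nonsing_inv _ hQdet]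
      · -- K2 = ⊤
        intro x y
        obtain ⟨b, hb, hb1⟩ := hsurjL x
        have hp : (x, blkR K ℓ m b) ∈ C := ⟨b, hb, hb1, rfl⟩
        have hq : ((0 : Matrix (Fin ℓ) (Fin ℓ) K), y - blkR K ℓ m b) ∈ C := by
          have : y - blkR K ℓ m b ∈ K2 := by rw [h2]; trivial
          exact this
        have := C.add_mem hp hq
        have heq : ((x, blkR K ℓ m b) + ((0 : Matrix (Fin ℓ) (Fin ℓ) K), y - blkR K ℓ m b))
            = (x, y) := by
          rw [Prod.mk_add_mk, add_zero]
          exact congrArg _ (by abel)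
        rwa [heq] at this
    · -- K1 = ⊤
      intro x y
      obtain ⟨b, hb, hb1⟩ := hsurjR y
      have hp : (blkL K ℓ m b, y) ∈ C := ⟨b, hb, rfl, hb1⟩
      have hq : (x - blkL K ℓ m b, (0 : Matrix (Fin m) (Fin m) K)) ∈ C := by
        have : x - blkL K ℓ m b ∈ K1 := by rw [h1]; trivial
        exact this
      have := C.add_mem hp hq
      have heq : ((blkL K ℓ m b, y) + (x - blkL K ℓ m b, (0 : Matrix (Fin m) (Fin m) K)))
          = (x, y) := by
        rw [Prod.mk_add_mk, add_zero]
        exact congrArg (fun z => (z, y)) (by abel)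
      rwa [heq] at this
  -- the intersection with the strictly upper triangular block
  let N : Submodule K (Matrix (Fin (ℓ + m)) (Fin (ℓ + m)) K) :=
    { carrier := { t | t ∈ B ∧ t ∈ Tblk K ℓ m }
      add_mem' := fun {x y} hx hy => ⟨add_mem hx.1 hy.1,
        fun i j h => by rw [Matrix.add_apply, hx.2 i j h, hy.2 i j h, add_zero]⟩
      zero_mem' := ⟨zero_mem B, fun i j h => rfl⟩
      smul_mem' := fun c x hx => ⟨B.smul_mem hx.1 c,
        fun i j h => by
          show c • x i j = 0
          rw [hx.2 i j h, smul_zero]⟩ }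
  -- N is nonzero, otherwise B would be semisimple
  have hNne : ∃ t, t ∈ N ∧ t ≠ 0 := by
    by_contra hcon
    push_neg at hcon
    haveI : IsSemisimpleRing (Matrix (Fin ℓ) (Fin ℓ) K) := aux_matrix_semisimple hℓ
    haveI : IsSemisimpleRing (Matrix (Fin m) (Fin m) K) := aux_matrix_semisimple hm
    let ψL : B →+* Matrix (Fin ℓ) (Fin ℓ) K :=
      { toFun := fun b => blkL K ℓ m b.1
        map_one' := blkL_one
        map_mul' := fun a b => blkL_mul a.1 b.1 (hBE b.1 b.2)
        map_zero' := rfl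
        map_add' := fun a b => blkL_add a.1 b.1 }
    let ψR : B →+* Matrix (Fin m) (Fin m) K :=
      { toFun := fun b => blkR K ℓ m b.1
        map_one' := blkR_one
        map_mul' := fun a b => blkR_mul a.1 b.1 (hBE a.1 a.2)
        map_zero' := rfl
        map_add' := fun a b => blkR_add a.1 b.1 }
    let ψ : B →+* Matrix (Fin ℓ) (Fin ℓ) K × Matrix (Fin m) (Fin m) K := ψL.prod ψR
    have hψ : ∀ b : B, ψ b = (blkL K ℓ m b.1, blkR K ℓ m b.1) := fun b => rfl
    have hinj : Function.Injective ψ := by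
      intro a b hab
      have hab1 : blkL K ℓ m a.1 = blkL K ℓ m b.1 := congrArg Prod.fst hab
      have hab2 : blkR K ℓ m a.1 = blkR K ℓ m b.1 := congrArg Prod.snd hab
      have hd : (a.1 - b.1) ∈ B := sub_mem a.2 b.2
      have hL0 : blkL K ℓ m (a.1 - b.1) = 0 := by
        rw [blkL_sub, hab1, sub_self]
      have hR0 : blkR K ℓ m (a.1 - b.1) = 0 := by
        rw [blkR_sub, hab2, sub_self]
      have hT : (a.1 - b.1) ∈ Tblk K ℓ m :=
        mem_Tblk_of_blocks_zero (hBE _ hd) hL0 hR0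
      have := hcon (a.1 - b.1) ⟨hd, hT⟩
      exact Subtype.ext (sub_eq_zero.1 this)
    have hsurj : Function.Surjective ψ := by
      rintro ⟨x, y⟩
      obtain ⟨b, hb, hb1, hb2⟩ := hCtop x y
      exact ⟨⟨b, hb⟩, by rw [hψ]; exact Prod.ext_iff.2 ⟨hb1, hb2⟩⟩
    have e := RingEquiv.ofBijective ψ ⟨hinj, hsurj⟩
    exact hnonsplit (e.symm.isSemisimpleRing)
  -- the upper-right blocks of N form a nonzero bimodule-closed subspace, hence everything
  let S : Submodule K (Matrix (Fin ℓ) (Fin m) K) :=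
    { carrier := { s | ∃ t ∈ N, upRblk K ℓ m t = s }
      add_mem' := by
        rintro p q ⟨t, ht, rfl⟩ ⟨t', ht', rfl⟩
        exact ⟨t + t', N.add_mem ht ht', upR_add t t'⟩
      zero_mem' := ⟨0, N.zero_mem, by ext i j <;> rfl⟩
      smul_mem' := by
        rintro c p ⟨t, ht, rfl⟩
        exact ⟨c • t, N.smul_mem c ht, upR_smul c t⟩ }
  have hStop : S = ⊤ := by
    refine aux_submodule_eq_top S ?_ ?_
    · rintro X s Y ⟨t, ht, rfl⟩
      obtain ⟨b1, hb1, hb1L⟩ := hsurjL X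
      obtain ⟨b2, hb2, hb2R⟩ := hsurjR Y
      have h1 := mul_mem_Tblk (hBE b1 hb1) ht.2
      have h2 := Tblk_mul_mem (hBE b2 hb2) h1.1
      refine ⟨b1 * t * b2, ⟨mul_mem (mul_mem hb1 ht.1) hb2, h2.1⟩, ?_⟩
      rw [h2.2, h1.2, hb1L, hb2R]
    · obtain ⟨t, htN, ht0⟩ := hNne
      refine ⟨upRblk K ℓ m t, ⟨t, htN, rfl⟩, ?_⟩
      intro hc
      apply ht0
      refine Tblk_ext htN.2 (fun i j h => rfl) ?_
      rw [hc]; ext i j <;> rfl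
  -- hence Tblk ⊆ B
  have hTB : ∀ t ∈ Tblk K ℓ m, t ∈ B := by
    intro t ht
    have : upRblk K ℓ m t ∈ S := by rw [hStop]; trivial
    obtain ⟨t', ht', heq⟩ := this
    have : t' = t := Tblk_ext ht'.2 ht heq
    rw [← this]
    exact ht'.1
  -- conclude
  refine le_antisymm hBle ?_
  intro e he
  obtain ⟨b, hb, hb1, hb2⟩ := hCtop (blkL K ℓ m e) (blkR K ℓ m e)
  have hd : (e - b).BlockTriangular (blkIdx ℓ m) := (he : _).sub (hBE b hb)
  have hL0 : blkL K ℓ m (e - b) = 0 := by rw [blkL_sub, hb1, sub_self]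
  have hR0 : blkR K ℓ m (e - b) = 0 := by rw [blkR_sub, hb2, sub_self]
  have hT : (e - b) ∈ Tblk K ℓ m := mem_Tblk_of_blocks_zero hd hL0 hR0
  have hdB : (e - b) ∈ B := hTB _ hT
  have : b + (e - b) = e := by abel
  rw [← this]
  exact add_mem hb hdB
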